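/- Let X be a Banach space admitting a countable family (g_n)_{n≥1} of bounded linear functionals that separates points (if g_n(f) = 0 for all n then f = 0). Let E ⊆ X be a closed subspace and suppose there is a bounded linear map J : ℓ^∞ → X with J(c₀) ⊆ E which induces an embedding (bounded below linear map) J' : ℓ^∞/c₀ → X/E. Then E is not complemented in X: there is no bounded linear projection of X onto a closed subspace G with X = E ⊕ G. -/

import Mathlib

open Filter

noncomputable def czero : Submodule ℝ (lp (fun _ : ℕ => ℝ) ⊤) where
  carrier := {u | Filter.Tendsto (fun n => u n) Filter.atTop (nhds 0)}
  add_mem' := by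
    intro a b ha hb
    have := ha.add hb
    simpa [lp.coeFn_add, Pi.add_apply] using this
  zero_mem' := by
    simp only []; simpa using (tendsto_const_nhds : Tendsto (fun _ : ℕ => (0:ℝ)) atTop (nhds 0))
  smul_mem' := by
    intro c u hu
    have := hu.const_mul c
    simpa [lp.coeFn_smul, Pi.smul_apply, smul_eq_mul, mul_zero] using this

namespace WhitleyAux

noncomputable def mkL (f : ℕ → ℝ) (C : ℝ) (h : ∀ n, |f n| ≤ C) :
    lp (fun _ : ℕ => ℝ) ⊤ :=
  ⟨f, memℓp_infty ⟨C, by rintro x ⟨n, rfl⟩; simpa [Real.norm_eq_abs] using h n⟩⟩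

@[simp] lemma mkL_apply (f : ℕ → ℝ) (C : ℝ) (h : ∀ n, |f n| ≤ C) (n : ℕ) :
    (mkL f C h : ∀ _ : ℕ, ℝ) n = f n := rfl

noncomputable def indL (A : Set ℕ) : lp (fun _ : ℕ => ℝ) ⊤ :=
  mkL (A.indicator 1) 1 (by
    intro n
    by_cases h : n ∈ A <;> simp [Set.indicator, h])

@[simp] lemma indL_apply (A : Set ℕ) (n : ℕ) :
    (indL A : ∀ _ : ℕ, ℝ) n = A.indicator 1 n := rfl

lemma mem_czero_of_eventually_zero (u : lp (fun _ : ℕ => ℝ) ⊤)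
    (h : ∀ᶠ n in atTop, (u : ∀ _ : ℕ, ℝ) n = 0) : u ∈ czero := by
  show Tendsto (fun n => (u : ∀ _ : ℕ, ℝ) n) atTop (nhds 0)
  exact Tendsto.congr' (by filter_upwards [h] with n hn using hn.symm) tendsto_const_nhds

lemma mem_czero_of_finite_support (u : lp (fun _ : ℕ => ℝ) ⊤) (F : Set ℕ) (hF : F.Finite)
    (h : ∀ n, n ∉ F → (u : ∀ _ : ℕ, ℝ) n = 0) : u ∈ czero := by
  apply mem_czero_of_eventually_zero
  have : ∀ᶠ n in cofinite, n ∉ F := hF.eventually_cofinite_notMem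
  rw [Nat.cofinite_eq_atTop] at this
  filter_upwards [this] with n hn using h n hn

lemma one_le_infDist_indL (A : Set ℕ) (hA : A.Infinite) :
    1 ≤ Metric.infDist (indL A) (czero : Set (lp (fun _ : ℕ => ℝ) ⊤)) := by
  by_contra hlt
  push_neg at hlt
  obtain ⟨v, hv, hdist⟩ := (Metric.infDist_lt_iff ⟨0, czero.zero_mem⟩).1 hlt
  have hεpos : 0 < 1 - dist (indL A) v := by linarith
  have hv' : Tendsto (fun n => (v : ∀ _ : ℕ, ℝ) n) atTop (nhds 0) := hv
  have hev : ∀ᶠ n in atTop, |(v : ∀ _ : ℕ, ℝ) n| < 1 - dist (indL A) v := by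
    have := Metric.tendsto_nhds.mp hv' _ hεpos
    simpa [Real.dist_eq] using this
  obtain ⟨N, hN⟩ := eventually_atTop.1 hev
  obtain ⟨n, hnA, hn⟩ := hA.exists_gt N
  have h1 : ‖(indL A - v : lp (fun _ : ℕ => ℝ) ⊤) n‖ ≤ ‖indL A - v‖ :=
    lp.norm_apply_le_norm (by simp) _ n
  have h2 : (indL A - v : lp (fun _ : ℕ => ℝ) ⊤) n = 1 - (v : ∀ _ : ℕ, ℝ) n := by
    rw [lp.coeFn_sub]
    simp [Set.indicator_of_mem hnA]
  have h3 : |(v : ∀ _ : ℕ, ℝ) n| < 1 - dist (indL A) v := hN n hn.le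
  rw [h2, Real.norm_eq_abs] at h1
  have h4 : 1 - |(v : ∀ _ : ℕ, ℝ) n| ≤ |1 - (v : ∀ _ : ℕ, ℝ) n| := by
    have := abs_sub_abs_le_abs_sub (1:ℝ) ((v : ∀ _ : ℕ, ℝ) n)
    simpa using this
  rw [dist_eq_norm] at *
  linarith


lemma rlt  (r : ℝ) (k : ℕ) : r < r + 1/((k:ℝ)+1) := by
  have h : (0:ℝ) < 1/((k:ℝ)+1) := by positivity
  linarith

noncomputable def rseq (r : ℝ) (k : ℕ) : ℚ :=
  (exists_rat_btwn (rlt r k)).choose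

lemma rseq_spec (r : ℝ) (k : ℕ) :
    r < (rseq r k : ℝ) ∧ (rseq r k : ℝ) < r + 1/((k:ℝ)+1) :=
  (exists_rat_btwn (rlt r k)).choose_spec

lemma rseq_range_infinite (r : ℝ) : (Set.range (rseq r)).Infinite := by
  intro hfin
  obtain ⟨q, hq, hqmin⟩ := Set.exists_min_image _ id hfin ⟨rseq r 0, Set.mem_range_self 0⟩
  have hrq : r < (q : ℝ) := by
    obtain ⟨k, rfl⟩ := hq
    exact (rseq_spec r k).1
  obtain ⟨k, hk⟩ := exists_nat_gt (1 / ((q:ℝ) - r))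
  have hpos : (0:ℝ) < (q:ℝ) - r := by linarith
  have hk1 : 1 / ((q:ℝ) - r) < (k:ℝ) + 1 := hk.trans (lt_add_one _)
  have h2 : 1 / ((k:ℝ)+1) < (q:ℝ) - r := by
    have h3 := one_div_lt_one_div_of_lt (by positivity) hk1
    rwa [one_div_one_div] at h3
  have h4 : (rseq r k : ℝ) < (q : ℝ) := lt_of_lt_of_le (rseq_spec r k).2 (by linarith)
  have h5 : q ≤ rseq r k := hqmin (rseq r k) (Set.mem_range_self k)
  exact absurd (Rat.cast_le (K := ℝ) |>.2 h5) (not_le.2 h4)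

lemma rseq_almost_disjoint {r r' : ℝ} (h : r < r') :
    (Set.range (rseq r) ∩ Set.range (rseq r')).Finite := by
  obtain ⟨K, hK⟩ := exists_nat_gt (1/(r' - r))
  apply Set.Finite.subset ((Set.finite_Iio K).image (rseq r))
  rintro q ⟨⟨k, rfl⟩, k', hk'⟩
  have hkK : k < K := by
    by_contra hkK
    push_neg at hkK
    have h1 : r' < (rseq r k : ℝ) := by rw [← hk']; exact (rseq_spec r' k').1
    have h2 : (rseq r k : ℝ) < r + 1/((k:ℝ)+1) := (rseq_spec r k).2
    have hpos : (0:ℝ) < r' - r := by linarith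
    have hk1 : 1 / (r' - r) < (k:ℝ) + 1 := by
      have : (K:ℝ) ≤ (k:ℝ) := Nat.cast_le.2 hkK
      linarith
    have h3 : 1 / ((k:ℝ)+1) < r' - r := by
      have h4 := one_div_lt_one_div_of_lt (by positivity) hk1
      rwa [one_div_one_div] at h4
    linarith
  exact ⟨k, hkK, rfl⟩

noncomputable def adFam (r : ℝ) : Set ℕ := Encodable.encode '' Set.range (rseq r)

lemma adFam_infinite (r : ℝ) : (adFam r).Infinite :=
  (rseq_range_infinite r).image (Encodable.encode_injective.injOn)

lemma adFam_ad {r r' : ℝ} (h : r ≠ r') : (adFam r ∩ adFam r').Finite := by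
  rw [adFam, adFam, ← Set.image_inter Encodable.encode_injective]
  apply Set.Finite.image
  rcases h.lt_or_gt with h | h
  · exact rseq_almost_disjoint h
  · rw [Set.inter_comm]; exact rseq_almost_disjoint h


lemma finite_big (h : lp (fun _ : ℕ => ℝ) ⊤ →L[ℝ] ℝ)
    (hh0 : ∀ u ∈ czero, h u = 0)
    {ι : Type*} (A : ι → Set ℕ)
    (had : ∀ i j, i ≠ j → (A i ∩ A j).Finite)
    (ε : ℝ) (hε : 0 < ε) :
    {i | ε ≤ |h (indL (A i))|}.Finite := by
  by_contra hinf
  rw [← Set.not_infinite, not_not] at hinf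
  obtain ⟨N, hN⟩ := exists_nat_gt (‖h‖ / ε)
  obtain ⟨s, hs_sub, hs_card⟩ := hinf.exists_subset_card_eq N
  classical
  set F : Set ℕ := ⋃ i ∈ s, ⋃ j ∈ s, ⋃ (_ : i ≠ j), (A i ∩ A j) with hF
  have hFfin : F.Finite := by
    apply Set.Finite.biUnion s.finite_toSet; intro i _
    apply Set.Finite.biUnion s.finite_toSet; intro j _
    rcases eq_or_ne i j with rfl | hij
    · simp
    · simpa [hij] using (had i j hij)
  set sgn : ι → ℝ := fun i => if 0 ≤ h (indL (A i)) then 1 else -1 with hsgn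
  have hsgn_abs : ∀ i, |sgn i| = 1 := by
    intro i; by_cases hi : 0 ≤ h (indL (A i)) <;> simp [hsgn, hi]
  have hsgn_mul : ∀ i, sgn i * h (indL (A i)) = |h (indL (A i))| := by
    intro i; by_cases hi : 0 ≤ h (indL (A i))
    · simp [hsgn, hi, abs_of_nonneg hi]
    · push_neg at hi; simp [hsgn, not_le.2 hi, abs_of_neg hi]
  set u : lp (fun _ : ℕ => ℝ) ⊤ := ∑ i ∈ s, sgn i • indL (A i \ F) with hu
  have hucoord : ∀ n, (u : ∀ _ : ℕ, ℝ) n = ∑ i ∈ s, sgn i * (A i \ F).indicator 1 n := by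
    intro n
    rw [hu, lp.coeFn_sum]
    simp only [Finset.sum_apply]
    refine Finset.sum_congr rfl fun i _ => ?_
    rw [lp.coeFn_smul]
    rfl
  -- h of indicator with F removed equals h of full indicator
  have hsame : ∀ i, h (indL (A i \ F)) = h (indL (A i)) := by
    intro i
    have hmem : indL (A i) - indL (A i \ F) ∈ czero := by
      apply mem_czero_of_finite_support _ F hFfin
      intro n hn
      rw [lp.coeFn_sub]
      simp only [Pi.sub_apply]
      show (A i).indicator 1 n - (A i \ F).indicator 1 n = 0
      by_cases hA : n ∈ A i
      · rw [Set.indicator_of_mem hA, Set.indicator_of_mem (show n ∈ A i \ F from ⟨hA, hn⟩)]; ring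
      · rw [Set.indicator_of_notMem hA, Set.indicator_of_notMem (fun h' => hA h'.1)]; ring
    have := hh0 _ hmem
    rw [map_sub] at this
    linarith
  -- norm bound
  have hnorm : ‖u‖ ≤ 1 := by
    apply lp.norm_le_of_forall_le zero_le_one
    intro n
    rw [Real.norm_eq_abs, hucoord n]
    by_cases hnF : n ∈ F
    · have : ∀ i ∈ s, sgn i * (A i \ F).indicator 1 n = 0 := by
        intro i _
        rw [Set.indicator_of_notMem (fun h' => h'.2 hnF)]
        ring
      rw [Finset.sum_eq_zero this]; norm_num
    · by_cases hex : ∃ i ∈ s, n ∈ A i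
      · obtain ⟨i₀, hi₀s, hi₀⟩ := hex
        have : ∑ i ∈ s, sgn i * (A i \ F).indicator 1 n = sgn i₀ * (A i₀ \ F).indicator 1 n := by
          apply Finset.sum_eq_single_of_mem i₀ hi₀s
          intro j hjs hji
          have hnj : n ∉ A j := by
            intro hnj
            exact hnF (Set.mem_biUnion hjs (Set.mem_biUnion hi₀s
              (Set.mem_iUnion.2 ⟨hji, show n ∈ A j ∩ A i₀ from ⟨hnj, hi₀⟩⟩)))
          rw [Set.indicator_of_notMem (fun h' => hnj h'.1)]; ring
        rw [this, Set.indicator_of_mem (show n ∈ A i₀ \ F from ⟨hi₀, hnF⟩)]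
        simp [abs_mul, hsgn_abs i₀]
      · push_neg at hex
        have : ∀ i ∈ s, sgn i * (A i \ F).indicator 1 n = 0 := by
          intro i his
          rw [Set.indicator_of_notMem (fun h' => hex i his h'.1)]; ring
        rw [Finset.sum_eq_zero this]; norm_num
  -- value of h u
  have hval : h u = ∑ i ∈ s, |h (indL (A i))| := by
    rw [hu, map_sum]
    refine Finset.sum_congr rfl fun i _ => ?_
    rw [map_smul, smul_eq_mul, hsame i, hsgn_mul i]
  have hlower : (N : ℝ) * ε ≤ h u := by
    rw [hval]
    have : ∑ _i ∈ s, ε ≤ ∑ i ∈ s, |h (indL (A i))| := by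
      apply Finset.sum_le_sum
      intro i his
      exact hs_sub his
    rw [Finset.sum_const, hs_card, nsmul_eq_mul] at this
    exact this
  have hupper : h u ≤ ‖h‖ := by
    calc h u ≤ |h u| := le_abs_self _
      _ ≤ ‖h‖ * ‖u‖ := h.le_opNorm u
      _ ≤ ‖h‖ * 1 := by
          apply mul_le_mul_of_nonneg_left hnorm (norm_nonneg h)
      _ = ‖h‖ := mul_one _
  have : ‖h‖ < (N : ℝ) * ε := by
    rw [div_lt_iff₀ hε] at hN
    exact hN
  linarith


end WhitleyAux

open WhitleyAux in
/-- Abstract Whitley-type non-complementation principle: if `X` has a countable separating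
family of bounded functionals and contains a copy of `ℓ^∞` whose quotient map
`ℓ^∞/c₀ → X/E` is bounded below, then the closed subspace `E` is not complemented in `X`. -/
theorem abstract_non_complemented
    (X : Type*) [NormedAddCommGroup X] [NormedSpace ℝ X] [CompleteSpace X]
    (g : ℕ → (X →L[ℝ] ℝ))
    (hsep : ∀ f : X, (∀ n, g n f = 0) → f = 0)
    (E : Submodule ℝ X) (hE : IsClosed (E : Set X))
    (J : lp (fun _ : ℕ => ℝ) ⊤ →L[ℝ] X)
    (hJc0 : ∀ u ∈ czero, J u ∈ E)
    (c : ℝ) (hc : 0 < c)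
    (hlow : ∀ u : lp (fun _ : ℕ => ℝ) ⊤,
      c * Metric.infDist u (czero : Set (lp (fun _ : ℕ => ℝ) ⊤)) ≤ Metric.infDist (J u) (E : Set X)) :
    ¬ Submodule.ClosedComplemented E := by
  rintro ⟨P, hP⟩
  set T : X →L[ℝ] X := ContinuousLinearMap.id ℝ X - (E.subtypeL.comp P) with hT
  have hTmem : ∀ x : X, T x = 0 → x ∈ E := by
    intro x hx
    have : x - (P x : X) = 0 := hx
    have hxe : x = (P x : X) := by rwa [sub_eq_zero] at this
    rw [hxe]; exact (P x).2
  have hTE : ∀ u ∈ czero, T (J u) = 0 := by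
    intro u hu
    have hmem : J u ∈ E := hJc0 u hu
    have h1 : P (J u) = ⟨J u, hmem⟩ := hP ⟨J u, hmem⟩
    show J u - (P (J u) : X) = 0
    rw [h1]; simp
  set h : ℕ → (lp (fun _ : ℕ => ℝ) ⊤ →L[ℝ] ℝ) := fun n => (g n).comp (T.comp J) with hh
  have hvan : ∀ n, ∀ u ∈ czero, h n u = 0 := by
    intro n u hu
    show g n (T (J u)) = 0
    rw [hTE u hu, map_zero]
  have hbad : {r : ℝ | ∃ n, h n (indL (adFam r)) ≠ 0}.Countable := by
    have hsub : {r : ℝ | ∃ n, h n (indL (adFam r)) ≠ 0} ⊆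
        ⋃ (n : ℕ) (m : ℕ), {r : ℝ | 1/((m:ℝ)+1) ≤ |h n (indL (adFam r))|} := by
      rintro r ⟨n, hn⟩
      have habs : 0 < |h n (indL (adFam r))| := abs_pos.2 hn
      obtain ⟨m, hm⟩ := exists_nat_gt (1/|h n (indL (adFam r))|)
      refine Set.mem_iUnion.2 ⟨n, Set.mem_iUnion.2 ⟨m, ?_⟩⟩
      have hm1 : 1/|h n (indL (adFam r))| < (m:ℝ) + 1 := hm.trans (lt_add_one _)
      have := one_div_lt_one_div_of_lt (by positivity) hm1
      rw [one_div_one_div] at this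
      exact this.le
    refine Set.Countable.mono hsub ?_
    refine Set.countable_iUnion fun n => Set.countable_iUnion fun m => ?_
    exact (finite_big (h n) (hvan n) adFam (fun i j hij => adFam_ad hij)
      (1/((m:ℝ)+1)) (by positivity)).countable
  have : ∃ r : ℝ, ∀ n, h n (indL (adFam r)) = 0 := by
    by_contra hcon
    push_neg at hcon
    have : (Set.univ : Set ℝ).Countable := by
      refine Set.Countable.mono ?_ hbad
      intro r _
      obtain ⟨n, hn⟩ := hcon r
      exact ⟨n, hn⟩
    exact Cardinal.not_countable_real this
  obtain ⟨r, hr⟩ := this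
  set u := indL (adFam r) with hu
  have hT0 : T (J u) = 0 := hsep _ (fun n => hr n)
  have hmem : J u ∈ E := hTmem _ hT0
  have h1 : Metric.infDist (J u) (E : Set X) = 0 := Metric.infDist_zero_of_mem hmem
  have h2 := hlow u
  have h3 := one_le_infDist_indL _ (adFam_infinite r)
  rw [h1] at h2
  nlinarith
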